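/- Let R be a graded ring in non-negative degrees, M a graded R-module, M' ⊆ M a homogeneous submodule, N ⊆ M/M' a submodule, and Ñ its preimage in M. If {x̃_i} is a Gröbner basis for Ñ, then the images x_i of the x̃_i in M/M' form a Gröbner basis for N. -/

import Mathlib

open DirectSum

section Defs

variable {A : Type*} [CommRing A] (𝒜 : ℤ → AddSubgroup A) [GradedRing 𝒜]
variable {M : Type*} [AddCommGroup M] [Module A M] (ℳ : ℤ → AddSubgroup M)
  [DirectSum.Decomposition ℳ]

/-- The degree of an element of a graded object: the largest `n` whose homogeneous
component is nonzero (junk value for `x = 0`). -/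
noncomputable def mdeg {σ M : Type*} [AddCommMonoid M] [SetLike σ M] [AddSubmonoidClass σ M]
    (ℳ : ℤ → σ) [DirectSum.Decomposition ℳ] (x : M) : ℤ :=
  sSup {n : ℤ | (DirectSum.decompose ℳ x n : M) ≠ 0}

/-- The initial (top-degree) term of an element. -/
noncomputable def ini {σ M : Type*} [AddCommMonoid M] [SetLike σ M] [AddSubmonoidClass σ M]
    (ℳ : ℤ → σ) [DirectSum.Decomposition ℳ] (x : M) : M :=
  (DirectSum.decompose ℳ x (mdeg ℳ x) : M)

/-- The initial submodule of a submodule `N`: generated by initial terms of nonzero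
elements of `N`. -/
def iniSub (N : Submodule A M) : Submodule A M :=
  Submodule.span A {m : M | ∃ x ∈ N, x ≠ 0 ∧ ini ℳ x = m}

/-- The ring grading is supported in non-negative degrees. -/
def RingNonnegGraded : Prop := ∀ n < (0 : ℤ), ∀ a ∈ 𝒜 n, a = (0 : A)

/-- The module grading is bounded below. -/
def ModuleBddBelow : Prop := ∃ n₀ : ℤ, ∀ n < n₀, ∀ m ∈ ℳ n, m = (0 : M)

/-- A family of elements of `N` is a Gröbner basis for `N`. -/
def IsGrobnerBasis {I : Type*} (N : Submodule A M) (x : I → M) : Prop :=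
  (∀ i, x i ∈ N) ∧
    Submodule.span A (Set.range fun i => ini ℳ (x i)) = iniSub ℳ N

/-- `a` gives a reduced expression `y = ∑ aᵢ xᵢ` with `deg aᵢ + deg xᵢ ≤ deg y`. -/
def IsReducedExpr {I : Type*} (x : I → M) (y : M) (a : I →₀ A) : Prop :=
  y = a.sum (fun i c => c • x i) ∧
    ∀ i ∈ a.support, mdeg 𝒜 (a i) + mdeg ℳ (x i) ≤ mdeg ℳ y

/-- Set version of a Gröbner basis. -/
def IsGrobnerBasisSet (N : Submodule A M) (s : Set M) : Prop :=
  s ⊆ (N : Set M) ∧ Submodule.span A (ini ℳ '' s) = iniSub ℳ N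

/-- `y` has a reduced expression in terms of the elements of `s`. -/
def HasReducedExprSet (s : Set M) (y : M) : Prop :=
  ∃ a : M →₀ A, ↑a.support ⊆ s ∧ y = a.sum (fun m c => c • m) ∧
    ∀ m ∈ a.support, mdeg 𝒜 (a m) + mdeg ℳ m ≤ mdeg ℳ y

/-- A submodule is homogeneous when it contains all homogeneous components of its
elements. -/
def IsHomogSubmodule (N : Submodule A M) : Prop :=
  ∀ x ∈ N, ∀ n : ℤ, (DirectSum.decompose ℳ x n : M) ∈ N

/-- Graded-coherent: finitely generated, and every finitely generated homogeneous
submodule is finitely presented. -/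
def GradedCoherent : Prop :=
  Module.Finite A M ∧ ∀ N : Submodule A M, N.FG → IsHomogSubmodule ℳ N →
    Module.FinitePresentation A N

/-- Gröbner-coherent: graded-coherent, and every finitely generated (possibly
inhomogeneous) submodule admits a finite Gröbner basis. -/
def GrobnerCoherent : Prop :=
  GradedCoherent (A := A) ℳ ∧ ∀ N : Submodule A M, N.FG →
    ∃ s : Finset M, IsGrobnerBasisSet ℳ N ↑s

/-- A homogeneous generating family of syzygies of the initial terms of the `x i`
(with the free module graded by `deg eᵢ = deg xᵢ`). -/
def IsHomogSyzygyGens {I J : Type*} (x : I → M) (c : J → I →₀ A) : Prop :=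
  (∀ j, ∃ d : ℤ, ∀ i, c j i ∈ 𝒜 (d - mdeg ℳ (x i))) ∧
    Submodule.span A (Set.range c) =
      LinearMap.ker (Finsupp.linearCombination A fun i => ini ℳ (x i))

/-- Set version of a homogeneous generating set of syzygies of initial terms. -/
def IsHomogSyzygyGensSet (X : Set M) (C : Set (M →₀ A)) : Prop :=
  (∀ c ∈ C, ↑c.support ⊆ X) ∧
  (∀ c ∈ C, ∃ d : ℤ, ∀ m : M, c m ∈ 𝒜 (d - mdeg ℳ m)) ∧
  Submodule.span A C =
    Finsupp.supported A A X ⊓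
      LinearMap.ker (Finsupp.linearCombination A fun m : M => ini ℳ m)

/-- The elements `z = ∑ c m • m` attached to a set of syzygies `C`. -/
def zElems (C : Set (M →₀ A)) : Set M :=
  (fun c : M →₀ A => c.sum fun m coeff => coeff • m) '' C

/-- One step of Buchberger's algorithm: adjoin the `z`-elements of a homogeneous
generating set of syzygies. -/
def BuchbergerStep (X Y : Set M) : Prop :=
  ∃ C : Set (M →₀ A), IsHomogSyzygyGensSet 𝒜 ℳ X C ∧ Y = X ∪ zElems C

end Defs

section Helpers
variable {M : Type*} [AddCommGroup M] (ℳ : ℤ → AddSubgroup M) [DirectSum.Decomposition ℳ]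

theorem degset_finite (x : M) : {n : ℤ | (DirectSum.decompose ℳ x n : M) ≠ 0}.Finite := by
  classical
  apply Set.Finite.subset (DirectSum.decompose ℳ x).support.finite_toSet
  intro n hn
  simp only [Set.mem_setOf_eq] at hn
  simp only [Finset.coe_sort_coe, DFinsupp.mem_support_toFun, Finset.mem_coe]
  intro h
  exact hn (by rw [h]; rfl)

theorem le_mdeg_aux {x : M} {n : ℤ} (h : (DirectSum.decompose ℳ x n : M) ≠ 0) :
    n ≤ mdeg ℳ x :=
  le_csSup (degset_finite ℳ x).bddAbove h

theorem decompose_eq_zero_of_mdeg_lt {x : M} {n : ℤ} (h : mdeg ℳ x < n) :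
    (DirectSum.decompose ℳ x n : M) = 0 := by
  by_contra hc
  exact absurd (le_mdeg_aux ℳ hc) (not_le.mpr h)

theorem mdeg_eq_of_greatest {x : M} {d : ℤ} (h1 : (DirectSum.decompose ℳ x d : M) ≠ 0)
    (h2 : ∀ n, d < n → (DirectSum.decompose ℳ x n : M) = 0) : mdeg ℳ x = d := by
  apply IsGreatest.csSup_eq
  exact ⟨h1, fun n hn => le_of_not_gt fun h => hn (h2 n h)⟩

theorem ini_mem_mdeg {x : M} (hx : x ≠ 0) :
    (DirectSum.decompose ℳ x (mdeg ℳ x) : M) ≠ 0 := by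
  classical
  have hne : {n : ℤ | (DirectSum.decompose ℳ x n : M) ≠ 0}.Nonempty := by
    by_contra h
    rw [Set.not_nonempty_iff_eq_empty] at h
    apply hx
    have := DirectSum.sum_support_decompose ℳ x
    rw [← this]
    apply Finset.sum_eq_zero
    intro n hn
    by_contra hc
    exact (Set.eq_empty_iff_forall_notMem.mp h n) hc
  exact hne.csSup_mem (degset_finite ℳ x)

theorem ini_zero : ini ℳ (0 : M) = 0 := by
  simp [ini]

theorem decompose_sum_components (t : Finset ℤ) (x : M) (m : ℤ) :
    (DirectSum.decompose ℳ (∑ n ∈ t, (DirectSum.decompose ℳ x n : M)) m : M) =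
      if m ∈ t then (DirectSum.decompose ℳ x m : M) else 0 := by
  induction t using Finset.induction with
  | empty => simp
  | @insert n t hn ih =>
      rw [Finset.sum_insert hn, DirectSum.decompose_add, DirectSum.add_apply,
        AddSubgroup.coe_add, ih]
      by_cases hmn : m = n
      · subst hmn
        rw [DirectSum.decompose_of_mem_same ℳ (SetLike.coe_mem _)]
        simp [hn]
      · rw [DirectSum.decompose_of_mem_ne ℳ (SetLike.coe_mem (DirectSum.decompose ℳ x n))
          (fun h => hmn h.symm)]
        simp [hmn]

end Helpers

section Quot
variable {A M : Type*} [CommRing A] [AddCommGroup M] [Module A M]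
  (ℳ : ℤ → AddSubgroup M) [DirectSum.Decomposition ℳ]
  (M' : Submodule A M) (ℳQ : ℤ → AddSubgroup (M ⧸ M')) [DirectSum.Decomposition ℳQ]

theorem decompose_mkQ
    (hcompat : ∀ n : ℤ, ℳQ n = (ℳ n).map M'.mkQ.toAddMonoidHom)
    (x : M) (n : ℤ) :
    (DirectSum.decompose ℳQ (M'.mkQ x) n : M ⧸ M') = M'.mkQ (DirectSum.decompose ℳ x n) := by
  induction x using DirectSum.Decomposition.inductionOn ℳ with
  | zero => simp
  | homogeneous m =>
      rename_i i
      have hm : M'.mkQ (m : M) ∈ ℳQ i := by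
        rw [hcompat]; exact ⟨m, m.2, rfl⟩
      by_cases h : n = i
      · subst h
        rw [DirectSum.decompose_of_mem_same ℳQ hm, DirectSum.decompose_of_mem_same ℳ m.2]
      · rw [DirectSum.decompose_of_mem_ne ℳQ hm (fun e => h e.symm),
          DirectSum.decompose_of_mem_ne ℳ m.2 (fun e => h e.symm)]
        simp
  | add a b ha hb =>
      rw [map_add, DirectSum.decompose_add, DirectSum.add_apply, AddSubgroup.coe_add, ha, hb,
        DirectSum.decompose_add, DirectSum.add_apply, AddSubgroup.coe_add, map_add]

end Quot


/-- If `{x̃ᵢ}` is a Gröbner basis for the preimage `Ñ` in `M` of a submodule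
`N ⊆ M/M'`, then the images `xᵢ` form a Gröbner basis for `N`. -/
theorem stmt_18 {A M : Type*} [CommRing A] (𝒜 : ℤ → AddSubgroup A) [GradedRing 𝒜]
    [AddCommGroup M] [Module A M] (ℳ : ℤ → AddSubgroup M) [DirectSum.Decomposition ℳ]
    [SetLike.GradedSMul 𝒜 ℳ]
    (hA : RingNonnegGraded 𝒜) (hM : ModuleBddBelow ℳ)
    (M' : Submodule A M) (hhom : IsHomogSubmodule ℳ M')
    (ℳQ : ℤ → AddSubgroup (M ⧸ M')) [DirectSum.Decomposition ℳQ]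
    (hcompat : ∀ n : ℤ, ℳQ n = (ℳ n).map M'.mkQ.toAddMonoidHom)
    {I : Type*} (N : Submodule A (M ⧸ M')) (xt : I → M)
    (hGB : IsGrobnerBasis ℳ (N.comap M'.mkQ) xt) :
    IsGrobnerBasis ℳQ N (fun i => M'.mkQ (xt i)) := by
  classical
  obtain ⟨hmem, hspan⟩ := hGB
  have key : ∀ (x : M) (n : ℤ), (DirectSum.decompose ℳQ (M'.mkQ x) n : M ⧸ M')
      = M'.mkQ (DirectSum.decompose ℳ x n) := decompose_mkQ ℳ M' ℳQ hcompat
  have hini : ∀ x : M, M'.mkQ (ini ℳ x) ≠ 0 → ini ℳQ (M'.mkQ x) = M'.mkQ (ini ℳ x) := by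
    intro x hne
    have h1 : (DirectSum.decompose ℳQ (M'.mkQ x) (mdeg ℳ x) : M ⧸ M') ≠ 0 := by
      rw [key]; exact hne
    have h2 : ∀ n, mdeg ℳ x < n → (DirectSum.decompose ℳQ (M'.mkQ x) n : M ⧸ M') = 0 := by
      intro n hn
      rw [key, decompose_eq_zero_of_mdeg_lt ℳ hn, map_zero]
    have hd : mdeg ℳQ (M'.mkQ x) = mdeg ℳ x := mdeg_eq_of_greatest ℳQ h1 h2
    show (DirectSum.decompose ℳQ (M'.mkQ x) (mdeg ℳQ (M'.mkQ x)) : M ⧸ M') = _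
    rw [hd, key]; rfl
  constructor
  · exact fun i => hmem i
  · apply le_antisymm
    · rw [Submodule.span_le]
      rintro _ ⟨i, rfl⟩
      show ini ℳQ (M'.mkQ (xt i)) ∈ (iniSub ℳQ N : Set (M ⧸ M'))
      by_cases h0 : M'.mkQ (xt i) = 0
      · rw [h0, ini_zero]
        exact (iniSub ℳQ N).zero_mem
      · exact Submodule.subset_span ⟨M'.mkQ (xt i), hmem i, h0, rfl⟩
    · show Submodule.span A _ ≤ _
      rw [Submodule.span_le]
      rintro _ ⟨y, hyN, hy0, rfl⟩
      obtain ⟨x, rfl⟩ := M'.mkQ_surjective y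
      set d := mdeg ℳQ (M'.mkQ x) with hd
      set t := (DirectSum.decompose ℳ x).support.filter (fun n => d < n) with ht
      set s := ∑ n ∈ t, (DirectSum.decompose ℳ x n : M) with hs
      have hsM' : s ∈ M' := by
        apply Submodule.sum_mem
        intro n hn
        rw [ht, Finset.mem_filter] at hn
        have h0 : M'.mkQ (DirectSum.decompose ℳ x n : M) = 0 := by
          rw [← key, decompose_eq_zero_of_mdeg_lt ℳQ hn.2]
        rwa [Submodule.mkQ_apply, Submodule.Quotient.mk_eq_zero] at h0
      set yt := x - s with hyt
      have hmk : M'.mkQ yt = M'.mkQ x := by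
        rw [hyt, map_sub]
        have : M'.mkQ s = 0 := (Submodule.Quotient.mk_eq_zero _).mpr hsM'
        rw [this, sub_zero]
      have hdec : ∀ m, (DirectSum.decompose ℳ yt m : M) =
          (DirectSum.decompose ℳ x m : M) -
            (if m ∈ t then (DirectSum.decompose ℳ x m : M) else 0) := by
        intro m
        rw [hyt, hs, DirectSum.decompose_sub, DirectSum.sub_apply, AddSubgroup.coe_sub,
          decompose_sum_components]
      have hyt_top : ∀ n, d < n → (DirectSum.decompose ℳ yt n : M) = 0 := by
        intro n hn
        rw [hdec]
        by_cases hns : n ∈ (DirectSum.decompose ℳ x).support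
        · rw [if_pos (by rw [ht]; exact Finset.mem_filter.mpr ⟨hns, hn⟩)]; exact sub_self _
        · have hz : (DirectSum.decompose ℳ x n : M) = 0 := by
            simp only [DFinsupp.mem_support_toFun, not_not] at hns
            rw [hns]; rfl
          simp [hz]
      have hyd : (DirectSum.decompose ℳ yt d : M) = DirectSum.decompose ℳ x d := by
        rw [hdec, if_neg, sub_zero]
        rw [ht, Finset.mem_filter]
        exact fun h => lt_irrefl d h.2
      have hxd : M'.mkQ (DirectSum.decompose ℳ x d : M) ≠ 0 := by
        rw [← key]; exact ini_mem_mdeg ℳQ hy0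
      have hytd : (DirectSum.decompose ℳ yt d : M) ≠ 0 := by
        rw [hyd]
        intro h
        rw [h, map_zero] at hxd
        exact hxd rfl
      have hmd : mdeg ℳ yt = d := mdeg_eq_of_greatest ℳ hytd hyt_top
      have hiniyt : ini ℳ yt = (DirectSum.decompose ℳ x d : M) := by
        show (DirectSum.decompose ℳ yt (mdeg ℳ yt) : M) = _
        rw [hmd, hyd]
      have hytmem : yt ∈ N.comap M'.mkQ := by
        simpa [Submodule.mem_comap, hmk] using hyN
      have hyt0 : yt ≠ 0 := by
        intro h
        apply hy0
        rw [← hmk, h, map_zero]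
      have h1 : ini ℳ yt ∈ Submodule.span A (Set.range fun i => ini ℳ (xt i)) := by
        rw [hspan]
        exact Submodule.subset_span ⟨yt, hytmem, hyt0, rfl⟩
      have h2 : M'.mkQ (ini ℳ yt) ∈ Submodule.map M'.mkQ
          (Submodule.span A (Set.range fun i => ini ℳ (xt i))) := ⟨_, h1, rfl⟩
      rw [Submodule.map_span] at h2
      have hgoal_eq : ini ℳQ (M'.mkQ x) = M'.mkQ (ini ℳ yt) := by
        rw [hiniyt]
        show (DirectSum.decompose ℳQ (M'.mkQ x) (mdeg ℳQ (M'.mkQ x)) : M ⧸ M') = _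
        rw [← hd, key]
      show ini ℳQ (M'.mkQ x) ∈ _
      rw [hgoal_eq]
      refine Submodule.span_le.mpr ?_ h2
      rintro _ ⟨_, ⟨i, rfl⟩, rfl⟩
      by_cases h0 : M'.mkQ (ini ℳ (xt i)) = 0
      · show M'.mkQ (ini ℳ (xt i)) ∈ _
        rw [h0]
        exact Submodule.zero_mem _
      · show M'.mkQ (ini ℳ (xt i)) ∈ _
        rw [← hini (xt i) h0]
        exact Submodule.subset_span ⟨i, rfl⟩
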